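/- Let Γ ⊂ ℝ^D be a d-dimensional L-Lipschitz graph and let f ∈ L¹(ℝ^D) be nonnegative. Let α > D − d. Then the function (A_α f)^{1 − (D−d)/α} restricted to Γ lies in weak-L¹ with respect to ℋ^d restricted to Γ, with the estimate ‖(A_α f)^{1−(D−d)/α}‖_{L^{1,∞}(Γ, ℋ^d)} ≤ C(α, D, d, L) ‖f‖_{L¹(ℝ^D)}. -/

import Mathlib

open MeasureTheory Metric ENNReal NNReal

noncomputable def ballAvg {D : ℕ} (f : EuclideanSpace ℝ (Fin D) → ℝ≥0∞) (ρ : ℝ)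
    (x : EuclideanSpace ℝ (Fin D)) : ℝ≥0∞ :=
  (∫⁻ y in Metric.ball x ρ, f y) / volume (Metric.ball x ρ)

noncomputable def scaleOp {D : ℕ} (α : ℝ) (f : EuclideanSpace ℝ (Fin D) → ℝ≥0∞)
    (x : EuclideanSpace ℝ (Fin D)) : ℝ≥0∞ :=
  sInf {s : ℝ≥0∞ | ∃ ρ : ℝ, 0 < ρ ∧ s = ENNReal.ofReal ρ ∧
    ENNReal.ofReal ρ ^ (-α) < ballAvg f ρ x}

noncomputable def avgOp {D : ℕ} (α : ℝ) (f : EuclideanSpace ℝ (Fin D) → ℝ≥0∞)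
    (x : EuclideanSpace ℝ (Fin D)) : ℝ≥0∞ :=
  scaleOp α f x ^ (-α)

lemma ball_bound (d : ℕ) : ∃ c : ℝ≥0∞, c ≠ ⊤ ∧ ∀ (u₀ : EuclideanSpace ℝ (Fin d)) (R : ℝ), 0 ≤ R →
    μH[(d:ℝ)] (closedBall u₀ R) ≤ c * ENNReal.ofReal R ^ (d:ℝ) := by
  set cA : ℝ≥0 := (d : ℝ≥0) ^ (2⁻¹ : ℝ) with hcA
  refine ⟨(cA : ℝ≥0∞) ^ (d:ℝ) * (2:ℝ≥0∞) ^ d, ENNReal.mul_ne_top (ENNReal.rpow_ne_top_of_nonneg (by positivity) ENNReal.coe_ne_top) (ENNReal.pow_ne_top ENNReal.ofNat_ne_top), fun u₀ R hR => ?_⟩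
  set φ := fun v : Fin d → ℝ => ((WithLp.equiv 2 (∀ _ : Fin d, ℝ)).symm v : EuclideanSpace ℝ (Fin d)) with hφdef
  have hφ : LipschitzWith cA φ := by
    intro a b
    have := (PiLp.antilipschitzWith_ofLp 2 (fun _ : Fin d => ℝ)) (φ a) (φ b)
    simpa [φ] using this
  have hsub : closedBall u₀ R ⊆ φ '' (closedBall (WithLp.equiv 2 (∀ _ : Fin d, ℝ) u₀) R) := by
    intro x hx
    refine ⟨WithLp.equiv 2 (∀ _ : Fin d, ℝ) x, ?_, by simp [φ]⟩
    rw [mem_closedBall] at hx ⊢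
    have := (PiLp.lipschitzWith_ofLp 2 (fun _ : Fin d => ℝ)).dist_le_mul x u₀
    simpa using this.trans (by simpa using hx)
  have hpi : (μH[(d:ℝ)] : Measure (Fin d → ℝ)) = volume := by
    have := hausdorffMeasure_pi_real (ι := Fin d)
    simpa using this
  calc μH[(d:ℝ)] (closedBall u₀ R) ≤ μH[(d:ℝ)] (φ '' (closedBall (WithLp.equiv 2 (∀ _ : Fin d, ℝ) u₀) R)) :=
        measure_mono hsub
    _ ≤ (cA : ℝ≥0∞) ^ (d:ℝ) * μH[(d:ℝ)] (closedBall (WithLp.equiv 2 (∀ _ : Fin d, ℝ) u₀) R) :=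
        hφ.hausdorffMeasure_image_le (by positivity) _
    _ ≤ (cA : ℝ≥0∞) ^ (d:ℝ) * ((2:ℝ≥0∞) ^ d * ENNReal.ofReal R ^ (d:ℝ)) := by
        gcongr
        rw [hpi, Real.volume_pi_closedBall _ hR]
        rw [ENNReal.ofReal_pow (by positivity), ENNReal.ofReal_mul (by norm_num), mul_pow,
          ENNReal.ofReal_ofNat, ← ENNReal.rpow_natCast (ENNReal.ofReal R), Fintype.card_fin]
    _ = (cA : ℝ≥0∞) ^ (d:ℝ) * (2:ℝ≥0∞) ^ d * ENNReal.ofReal R ^ (d:ℝ) := by ring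

lemma graph_bound (D d m : ℕ) (L : ℝ≥0) :
    ∃ c : ℝ≥0∞, c ≠ ⊤ ∧
    ∀ (e : EuclideanSpace ℝ (Fin D) ≃ₗᵢ[ℝ]
        WithLp 2 (EuclideanSpace ℝ (Fin d) × EuclideanSpace ℝ (Fin m)))
      (U : Set (EuclideanSpace ℝ (Fin d)))
      (g : EuclideanSpace ℝ (Fin d) → EuclideanSpace ℝ (Fin m)),
      LipschitzOnWith L g U →
      ∀ z ∈ {x : EuclideanSpace ℝ (Fin D) |
          (WithLp.equiv 2 (EuclideanSpace ℝ (Fin d) × EuclideanSpace ℝ (Fin m)) (e x)).1 ∈ U ∧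
          (WithLp.equiv 2 (EuclideanSpace ℝ (Fin d) × EuclideanSpace ℝ (Fin m)) (e x)).2 =
            g (WithLp.equiv 2 (EuclideanSpace ℝ (Fin d) × EuclideanSpace ℝ (Fin m)) (e x)).1},
      ∀ R : ℝ, 0 ≤ R →
      μH[(d:ℝ)] ({x : EuclideanSpace ℝ (Fin D) |
          (WithLp.equiv 2 (EuclideanSpace ℝ (Fin d) × EuclideanSpace ℝ (Fin m)) (e x)).1 ∈ U ∧
          (WithLp.equiv 2 (EuclideanSpace ℝ (Fin d) × EuclideanSpace ℝ (Fin m)) (e x)).2 =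
            g (WithLp.equiv 2 (EuclideanSpace ℝ (Fin d) × EuclideanSpace ℝ (Fin m)) (e x)).1}
          ∩ closedBall z R) ≤ c * ENNReal.ofReal R ^ (d:ℝ) := by
  obtain ⟨c₀, hc₀, hball⟩ := ball_bound d
  refine ⟨((1 + L : ℝ≥0) : ℝ≥0∞) ^ (d:ℝ) * c₀,
    ENNReal.mul_ne_top (ENNReal.rpow_ne_top_of_nonneg (by positivity) ENNReal.coe_ne_top) hc₀,
    fun e U g hg z hz R hR => ?_⟩
  set ψ := WithLp.equiv 2 (EuclideanSpace ℝ (Fin d) × EuclideanSpace ℝ (Fin m)) with hψ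
  set Γ : Set (EuclideanSpace ℝ (Fin D)) :=
    {x | (ψ (e x)).1 ∈ U ∧ (ψ (e x)).2 = g (ψ (e x)).1} with hΓ
  set h := fun u : EuclideanSpace ℝ (Fin d) => e.symm (ψ.symm (u, g u)) with hh
  have hlip : LipschitzOnWith (1 + L) h U := by
    apply LipschitzOnWith.of_dist_le_mul
    intro u hu u' hu'
    have h1 : dist (h u) (h u') = dist (ψ.symm (u, g u)) (ψ.symm (u', g u')) := by
      simp [hh]
    rw [h1, WithLp.prod_dist_eq_of_L2]
    have hb : dist (g u) (g u') ≤ L * dist u u' := hg.dist_le_mul u hu u' hu'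
    have key : Real.sqrt (dist u u' ^ 2 + dist (g u) (g u') ^ 2)
        ≤ dist u u' + dist (g u) (g u') := by
      rw [show dist u u' + dist (g u) (g u') =
          Real.sqrt ((dist u u' + dist (g u) (g u')) ^ 2) by
        rw [Real.sqrt_sq (by positivity)]]
      apply Real.sqrt_le_sqrt
      nlinarith [dist_nonneg (x := u) (y := u'), dist_nonneg (x := g u) (y := g u')]
    refine le_trans (le_of_eq ?_) (key.trans ?_)
    · rfl
    · push_cast
      nlinarith [dist_nonneg (x := u) (y := u')]
  have hsub : Γ ∩ closedBall z R ⊆ h '' (U ∩ closedBall (ψ (e z)).1 R) := by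
    rintro x ⟨⟨hxU, hxg⟩, hxB⟩
    refine ⟨(ψ (e x)).1, ⟨hxU, ?_⟩, ?_⟩
    · rw [mem_closedBall]
      have h2 : dist (e x) (e z) = Real.sqrt
          (dist (ψ (e x)).1 (ψ (e z)).1 ^ 2 +
           dist (ψ (e x)).2 (ψ (e z)).2 ^ 2) := WithLp.prod_dist_eq_of_L2 _ _
      have h3 : dist (ψ (e x)).1 (ψ (e z)).1 ≤ dist (e x) (e z) := by
        rw [h2]
        refine le_trans (le_of_eq (Real.sqrt_sq dist_nonneg).symm) (Real.sqrt_le_sqrt ?_)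
        nlinarith [dist_nonneg (x := (ψ (e x)).2) (y := (ψ (e z)).2)]
      exact h3.trans (by rw [e.dist_map]; exact hxB)
    · rw [hh]
      simp only [← hxg]
      have : (ψ.symm ((ψ (e x)).1, (ψ (e x)).2)) = e x := by
        rw [show ((ψ (e x)).1, (ψ (e x)).2) = ψ (e x) from rfl]
        exact ψ.symm_apply_apply _
      rw [this, e.symm_apply_apply]
  calc μH[(d:ℝ)] (Γ ∩ closedBall z R)
      ≤ μH[(d:ℝ)] (h '' (U ∩ closedBall (ψ (e z)).1 R)) := measure_mono hsub
    _ ≤ ((1 + L : ℝ≥0) : ℝ≥0∞) ^ (d:ℝ) * μH[(d:ℝ)] (U ∩ closedBall (ψ (e z)).1 R) :=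
        (hlip.mono Set.inter_subset_left).hausdorffMeasure_image_le (by positivity)
    _ ≤ ((1 + L : ℝ≥0) : ℝ≥0∞) ^ (d:ℝ) * (c₀ * ENNReal.ofReal R ^ (d:ℝ)) := by
        gcongr
        exact (measure_mono Set.inter_subset_right).trans (hball _ _ hR)
    _ = ((1 + L : ℝ≥0) : ℝ≥0∞) ^ (d:ℝ) * c₀ * ENNReal.ofReal R ^ (d:ℝ) := by ring

lemma vol_ball (D : ℕ) (x : EuclideanSpace ℝ (Fin D)) {ρ : ℝ} (hρ : 0 < ρ) :
    volume (ball x ρ) = ENNReal.ofReal (ρ ^ D) * volume (ball (0 : EuclideanSpace ℝ (Fin D)) 1) := by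
  rcases Nat.eq_zero_or_pos D with hD0 | hD0
  · subst hD0
    haveI : Subsingleton (EuclideanSpace ℝ (Fin 0)) :=
      ⟨fun a b => PiLp.ext fun i => Fin.elim0 i⟩
    have h1 : ball x ρ = Set.univ :=
      Set.eq_univ_of_forall fun y => by rw [Subsingleton.elim y x]; exact mem_ball_self hρ
    have h2 : ball (0 : EuclideanSpace ℝ (Fin 0)) 1 = Set.univ :=
      Set.eq_univ_of_forall fun y => by
        rw [Subsingleton.elim y (0 : EuclideanSpace ℝ (Fin 0))]; exact mem_ball_self one_pos
    simp [h1, h2]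
  · haveI : Nontrivial (EuclideanSpace ℝ (Fin D)) := by
      refine ⟨⟨EuclideanSpace.single (⟨0, hD0⟩ : Fin D) (1 : ℝ), 0, fun h => ?_⟩⟩
      have := congrArg (fun w : EuclideanSpace ℝ (Fin D) => w (⟨0, hD0⟩ : Fin D)) h
      simp [EuclideanSpace.single_apply] at this
    rw [Measure.addHaar_ball (volume : Measure (EuclideanSpace ℝ (Fin D))) x hρ.le, finrank_euclideanSpace_fin]

theorem stmt7 (D d m : ℕ) (hD : D = d + m) (L : ℝ≥0) {α : ℝ} (hα : (D : ℝ) - d < α) :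
    ∃ C : ℝ≥0∞, 0 < C ∧ C < ⊤ ∧
      ∀ (e : EuclideanSpace ℝ (Fin D) ≃ₗᵢ[ℝ]
          WithLp 2 (EuclideanSpace ℝ (Fin d) × EuclideanSpace ℝ (Fin m)))
        (U : Set (EuclideanSpace ℝ (Fin d)))
        (g : EuclideanSpace ℝ (Fin d) → EuclideanSpace ℝ (Fin m)),
        LipschitzOnWith L g U →
        ∀ f : EuclideanSpace ℝ (Fin D) → ℝ≥0∞, Measurable f →
        (∫⁻ y, f y) < ⊤ →
        ∀ lam : ℝ, 0 < lam →
        ENNReal.ofReal lam *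
          MeasureTheory.Measure.hausdorffMeasure (d : ℝ)
            {x : EuclideanSpace ℝ (Fin D) |
              ((WithLp.equiv 2 (EuclideanSpace ℝ (Fin d) × EuclideanSpace ℝ (Fin m)) (e x)).1 ∈ U ∧
               (WithLp.equiv 2 (EuclideanSpace ℝ (Fin d) × EuclideanSpace ℝ (Fin m)) (e x)).2 =
                 g (WithLp.equiv 2 (EuclideanSpace ℝ (Fin d) × EuclideanSpace ℝ (Fin m)) (e x)).1) ∧
              ENNReal.ofReal lam < (avgOp α f x) ^ (1 - ((D : ℝ) - d) / α)}
          ≤ C * ∫⁻ y, f y := by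
  classical
  have hm : ((D : ℝ) - d) = (m : ℝ) := by subst hD; push_cast; ring
  set β : ℝ := α - m with hβdef
  have hβ : 0 < β := by rw [hβdef]; rw [hm] at hα; linarith
  have hα0 : 0 < α := lt_of_le_of_lt (by positivity : (0:ℝ) ≤ (m:ℝ)) (hm ▸ hα)
  set v : ℝ≥0∞ := volume (ball (0 : EuclideanSpace ℝ (Fin D)) 1) with hv
  have hv0 : v ≠ 0 := (measure_ball_pos _ _ one_pos).ne'
  have hvt : v ≠ ⊤ := measure_ball_lt_top.ne
  obtain ⟨cΓ, hcΓt, hgraph⟩ := graph_bound D d m L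
  refine ⟨(cΓ + 1) * ENNReal.ofReal 4 ^ (d:ℝ) * v⁻¹, ?_, ?_, ?_⟩
  · apply ENNReal.mul_pos
    · apply (ENNReal.mul_pos _ _).ne'
      · exact (lt_of_lt_of_le zero_lt_one le_add_self).ne'
      · exact (ENNReal.rpow_pos (by norm_num) ENNReal.ofReal_ne_top).ne'
    · exact (ENNReal.inv_pos.mpr hvt).ne'
  · exact lt_top_iff_ne_top.mpr (ENNReal.mul_ne_top (ENNReal.mul_ne_top
      (ENNReal.add_ne_top.mpr ⟨hcΓt, ENNReal.one_ne_top⟩)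
      (ENNReal.rpow_ne_top_of_nonneg (by positivity : (0:ℝ) ≤ (d:ℝ)) ENNReal.ofReal_ne_top))
      (ENNReal.inv_ne_top.mpr hv0))
  intro e U g hg f hf hfint lam hlam
  set Γ : Set (EuclideanSpace ℝ (Fin D)) :=
    {x | (WithLp.equiv 2 (EuclideanSpace ℝ (Fin d) × EuclideanSpace ℝ (Fin m)) (e x)).1 ∈ U ∧
         (WithLp.equiv 2 (EuclideanSpace ℝ (Fin d) × EuclideanSpace ℝ (Fin m)) (e x)).2 =
           g (WithLp.equiv 2 (EuclideanSpace ℝ (Fin d) × EuclideanSpace ℝ (Fin m)) (e x)).1}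
    with hΓdef
  set E : Set (EuclideanSpace ℝ (Fin D)) :=
    {x | ((WithLp.equiv 2 (EuclideanSpace ℝ (Fin d) × EuclideanSpace ℝ (Fin m)) (e x)).1 ∈ U ∧
          (WithLp.equiv 2 (EuclideanSpace ℝ (Fin d) × EuclideanSpace ℝ (Fin m)) (e x)).2 =
            g (WithLp.equiv 2 (EuclideanSpace ℝ (Fin d) × EuclideanSpace ℝ (Fin m)) (e x)).1) ∧
         ENNReal.ofReal lam < (avgOp α f x) ^ (1 - ((D : ℝ) - d) / α)} with hEdef
  set r₀ : ℝ := lam ^ (-1/β) with hr₀def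
  have hr₀ : 0 < r₀ := Real.rpow_pos_of_pos hlam _
  have hlam0 : ENNReal.ofReal lam ≠ 0 := (ENNReal.ofReal_pos.mpr hlam).ne'
  have hor₀ : ENNReal.ofReal r₀ = ENNReal.ofReal lam ^ (-1/β) :=
    (ENNReal.ofReal_rpow_of_pos hlam).symm
  -- selection of good radii
  have hsel : ∀ x ∈ E, ∃ ρ : ℝ, 0 < ρ ∧ ρ < r₀ ∧
      ENNReal.ofReal ρ ^ ((D:ℝ) - α) * v < ∫⁻ y in ball x ρ, f y := by
    intro x hx
    have hlt : ENNReal.ofReal lam < (avgOp α f x) ^ (1 - ((D : ℝ) - d) / α) := hx.2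
    have hexp : (avgOp α f x) ^ (1 - ((D : ℝ) - d) / α) = scaleOp α f x ^ (-β) := by
      rw [avgOp, ← ENNReal.rpow_mul]
      congr 1
      rw [hm]
      field_simp
      ring
    rw [hexp] at hlt
    have hslt : scaleOp α f x < ENNReal.ofReal r₀ := by
      by_contra hcon
      push_neg at hcon
      have h1 : scaleOp α f x ^ (-β) ≤ (ENNReal.ofReal r₀) ^ (-β) := by
        rw [ENNReal.rpow_neg, ENNReal.rpow_neg]
        exact ENNReal.inv_le_inv.mpr (ENNReal.rpow_le_rpow hcon hβ.le)
      have h2 : (ENNReal.ofReal r₀) ^ (-β) = ENNReal.ofReal lam := by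
        rw [hor₀, ← ENNReal.rpow_mul]
        rw [show (-1/β) * (-β) = 1 by field_simp]
        exact ENNReal.rpow_one _
      rw [h2] at h1
      exact lt_irrefl _ (hlt.trans_le h1)
    obtain ⟨s, hsS, hslt'⟩ := sInf_lt_iff.mp hslt
    obtain ⟨ρ, hρ0, hseq, hcond⟩ := hsS
    subst hseq
    have hρr₀ : ρ < r₀ := (ENNReal.ofReal_lt_ofReal_iff hr₀).mp hslt'
    have hV : volume (ball x ρ) = ENNReal.ofReal (ρ ^ D) * v := vol_ball D x hρ0
    have hV0 : volume (ball x ρ) ≠ 0 := by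
      rw [hV]; exact mul_ne_zero (ENNReal.ofReal_pos.mpr (by positivity)).ne' hv0
    have hVt : volume (ball x ρ) ≠ ⊤ := measure_ball_lt_top.ne
    rw [ballAvg] at hcond
    have hkey := (ENNReal.lt_div_iff_mul_lt (Or.inl hV0) (Or.inl hVt)).mp hcond
    refine ⟨ρ, hρ0, hρr₀, ?_⟩
    calc ENNReal.ofReal ρ ^ ((D:ℝ) - α) * v
        = ENNReal.ofReal ρ ^ (-α) * volume (ball x ρ) := by
          rw [hV, show ENNReal.ofReal (ρ^D) = ENNReal.ofReal ρ ^ ((D:ℝ)) by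
              rw [← Real.rpow_natCast ρ D]; exact (ENNReal.ofReal_rpow_of_pos hρ0).symm,
            ← mul_assoc,
            ← ENNReal.rpow_add _ _ (ENNReal.ofReal_pos.mpr hρ0).ne' ENNReal.ofReal_ne_top]
          congr 2
          ring
      _ < _ := hkey
  -- choose radii
  have hselx : ∀ x : EuclideanSpace ℝ (Fin D), ∃ ρ : ℝ, x ∈ E → (0 < ρ ∧ ρ < r₀ ∧
      ENNReal.ofReal ρ ^ ((D:ℝ) - α) * v < ∫⁻ y in ball x ρ, f y) := by
    intro x
    by_cases hx : x ∈ E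
    · obtain ⟨ρ, h⟩ := hsel x hx; exact ⟨ρ, fun _ => h⟩
    · exact ⟨1, fun h => absurd h hx⟩
  choose r hr using hselx
  -- Vitali
  obtain ⟨u, huE, hudisj, hucov⟩ :=
    Vitali.exists_disjoint_subfamily_covering_enlargement_closedBall E id r r₀
      (fun a ha => ((hr a ha).2.1).le) 4 (by norm_num)
  have hru : ∀ b ∈ u, 0 < r b := fun b hb => (hr b (huE hb)).1
  have hucnt : u.Countable := by
    apply hudisj.countable_of_nonempty_interior
    intro b hb
    exact ⟨b, ball_subset_interior_closedBall (mem_ball_self (hru b hb))⟩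
  haveI : Countable ↥u := hucnt.to_subtype
  -- E covered
  have hEsub : E ⊆ ⋃ b ∈ u, (Γ ∩ closedBall b (4 * r b)) := by
    intro x hx
    obtain ⟨b, hbu, hball⟩ := hucov x hx
    have hxb : x ∈ closedBall (id b) (4 * r b) :=
      hball (mem_closedBall_self (hr x hx).1.le)
    exact Set.mem_biUnion hbu ⟨hx.1, hxb⟩
  -- per-term bound
  set K : ℝ≥0∞ := cΓ * ENNReal.ofReal 4 ^ (d:ℝ) * (ENNReal.ofReal lam)⁻¹ * v⁻¹ with hK
  have hterm : ∀ b ∈ u, μH[(d:ℝ)] (Γ ∩ closedBall b (4 * r b)) ≤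
      K * ∫⁻ y in ball b (r b), f y := by
    intro b hb
    obtain ⟨hb0, hbr₀, hbkey⟩ := hr b (huE hb)
    have h1 : μH[(d:ℝ)] (Γ ∩ closedBall b (4 * r b)) ≤
        cΓ * ENNReal.ofReal (4 * r b) ^ (d:ℝ) :=
      hgraph e U g hg b (huE hb).1 (4 * r b) (by positivity)
    have h2 : ENNReal.ofReal (4 * r b) ^ (d:ℝ) =
        ENNReal.ofReal 4 ^ (d:ℝ) * ENNReal.ofReal (r b) ^ (d:ℝ) := by
      rw [ENNReal.ofReal_mul (by norm_num), ENNReal.mul_rpow_of_nonneg _ _ (by positivity)]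
    have h3 : ENNReal.ofReal (r b) ^ (d:ℝ) ≤
        (ENNReal.ofReal lam)⁻¹ * (v⁻¹ * ∫⁻ y in ball b (r b), f y) := by
      have hsplit : (d:ℝ) = β + ((D:ℝ) - α) := by
        rw [hβdef]
        have : (D:ℝ) = (d:ℝ) + m := by subst hD; push_cast; ring
        linarith
      rw [hsplit, ENNReal.rpow_add _ _ (ENNReal.ofReal_pos.mpr hb0).ne' ENNReal.ofReal_ne_top]
      apply mul_le_mul'
      · calc ENNReal.ofReal (r b) ^ β ≤ ENNReal.ofReal r₀ ^ β :=
              ENNReal.rpow_le_rpow (ENNReal.ofReal_le_ofReal hbr₀.le) hβ.le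
          _ = (ENNReal.ofReal lam)⁻¹ := by
              rw [hor₀, ← ENNReal.rpow_mul, show (-1/β) * β = -1 by field_simp,
                ENNReal.rpow_neg, ENNReal.rpow_one]
      · have := hbkey.le
        rw [← ENNReal.le_div_iff_mul_le (Or.inl hv0) (Or.inl hvt)] at this
        rwa [div_eq_mul_inv, mul_comm] at this
    calc μH[(d:ℝ)] (Γ ∩ closedBall b (4 * r b)) ≤ cΓ * ENNReal.ofReal (4 * r b) ^ (d:ℝ) := h1
      _ = cΓ * ENNReal.ofReal 4 ^ (d:ℝ) * ENNReal.ofReal (r b) ^ (d:ℝ) := by rw [h2]; ring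
      _ ≤ cΓ * ENNReal.ofReal 4 ^ (d:ℝ) *
            ((ENNReal.ofReal lam)⁻¹ * (v⁻¹ * ∫⁻ y in ball b (r b), f y)) := by gcongr
      _ = K * ∫⁻ y in ball b (r b), f y := by rw [hK]; ring
  -- disjointness and sum of integrals
  have hdisj : Pairwise (Function.onFun Disjoint fun b : u => ball (b : EuclideanSpace ℝ (Fin D)) (r b)) := by
    intro i j hij
    have hne : (i : EuclideanSpace ℝ (Fin D)) ≠ (j : EuclideanSpace ℝ (Fin D)) :=
      fun h => hij (Subtype.ext h)
    have := hudisj i.2 j.2 hne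
    exact Disjoint.mono ball_subset_closedBall ball_subset_closedBall this
  have hsum : (∑' b : u, ∫⁻ y in ball (b : EuclideanSpace ℝ (Fin D)) (r b), f y) ≤ ∫⁻ y, f y := by
    rw [← lintegral_iUnion (fun b : u => measurableSet_ball) hdisj]
    exact setLIntegral_le_lintegral _ _
  -- assemble
  have hmain : μH[(d:ℝ)] E ≤ K * ∫⁻ y, f y := by
    calc μH[(d:ℝ)] E ≤ μH[(d:ℝ)] (⋃ b ∈ u, (Γ ∩ closedBall b (4 * r b))) := measure_mono hEsub
      _ ≤ ∑' b : u, μH[(d:ℝ)] (Γ ∩ closedBall (b : EuclideanSpace ℝ (Fin D)) (4 * r b)) :=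
          measure_biUnion_le _ hucnt _
      _ ≤ ∑' b : u, K * ∫⁻ y in ball (b : EuclideanSpace ℝ (Fin D)) (r b), f y :=
          ENNReal.tsum_le_tsum fun b => hterm b b.2
      _ = K * ∑' b : u, ∫⁻ y in ball (b : EuclideanSpace ℝ (Fin D)) (r b), f y :=
          ENNReal.tsum_mul_left
      _ ≤ K * ∫⁻ y, f y := by gcongr
  calc ENNReal.ofReal lam * μH[(d:ℝ)] E ≤ ENNReal.ofReal lam * (K * ∫⁻ y, f y) := by gcongr
    _ = (cΓ * ENNReal.ofReal 4 ^ (d:ℝ) * v⁻¹) * (ENNReal.ofReal lam * (ENNReal.ofReal lam)⁻¹) *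
          ∫⁻ y, f y := by rw [hK]; ring
    _ = (cΓ * ENNReal.ofReal 4 ^ (d:ℝ) * v⁻¹) * ∫⁻ y, f y := by
        rw [ENNReal.mul_inv_cancel hlam0 ENNReal.ofReal_ne_top, mul_one]
    _ ≤ (cΓ + 1) * ENNReal.ofReal 4 ^ (d:ℝ) * v⁻¹ * ∫⁻ y, f y := by gcongr; exact le_self_add
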